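/- arXiv:1005.2919 — 4 statements merged into one kernel-verified Lean document; each statement's English description precedes it below -/
import Mathlib

section
/- If H(z) = 1 + 6z + 6z² + 2z³, then the formal power series 1/H(−z) = 1/(1 − 6z + 6z² − 2z³) has all coefficients nonnegative (in fact positive) integers. -/
open PowerSeries

private def aSeq : ℕ → ℕ
  | 0 => 1
  | 1 => 6
  | 2 => 30
  | n+3 => 6 * aSeq (n+2) + 2 * aSeq n - 6 * aSeq (n+1)

private lemma aSeq_grow : ∀ n : ℕ, 4 * aSeq n ≤ aSeq (n+1) ∧ 4 * aSeq (n+1) ≤ aSeq (n+2) := by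
  intro n
  induction n with
  | zero => simp [aSeq]
  | succ k ih =>
    obtain ⟨h1, h2⟩ := ih
    refine ⟨h2, ?_⟩
    show 4 * aSeq (k+2) ≤ 6 * aSeq (k+2) + 2 * aSeq k - 6 * aSeq (k+1)
    omega

private lemma aSeq_pos : ∀ n, 0 < aSeq n := by
  intro n
  induction n with
  | zero => simp [aSeq]
  | succ k ih => have := (aSeq_grow k).1; omega

private lemma aSeq_rec (n : ℕ) :
    (aSeq (n+3) : ℚ) = 6 * aSeq (n+2) - 6 * aSeq (n+1) + 2 * aSeq n := by
  have h1 := (aSeq_grow n).1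
  have h2 := (aSeq_grow n).2
  have : aSeq (n+3) + 6 * aSeq (n+1) = 6 * aSeq (n+2) + 2 * aSeq n := by
    show (6 * aSeq (n+2) + 2 * aSeq n - 6 * aSeq (n+1)) + 6 * aSeq (n+1) = _
    omega
  have := congrArg (fun x : ℕ => (x : ℚ)) this
  push_cast at this
  linarith

private lemma inv_eq : ((1 - 6 * PowerSeries.X + 6 * PowerSeries.X ^ 2 - 2 * PowerSeries.X ^ 3 :
    PowerSeries ℚ))⁻¹ = PowerSeries.mk (fun n => (aSeq n : ℚ)) := by
  have hc : constantCoeff (1 - 6 * PowerSeries.X + 6 * PowerSeries.X ^ 2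
      - 2 * PowerSeries.X ^ 3 : PowerSeries ℚ) ≠ 0 := by
    simp
  rw [PowerSeries.inv_eq_iff_mul_eq_one hc]
  set F : PowerSeries ℚ := PowerSeries.mk (fun n => (aSeq n : ℚ)) with hF
  have key : F * (1 - 6 * PowerSeries.X + 6 * PowerSeries.X ^ 2 - 2 * PowerSeries.X ^ 3 :
      PowerSeries ℚ) = F - 6 * (X ^ 1 * F) + 6 * (X ^ 2 * F) - 2 * (X ^ 3 * F) := by ring
  have h6 : (6 : ℚ⟦X⟧) = C 6 := (map_ofNat (C (R := ℚ)) 6).symm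
  have h2' : (2 : ℚ⟦X⟧) = C 2 := (map_ofNat (C (R := ℚ)) 2).symm
  rw [key, h6, h2']
  ext n
  simp only [map_sub, map_add, PowerSeries.coeff_C_mul, PowerSeries.coeff_X_pow_mul',
    hF, PowerSeries.coeff_mk, PowerSeries.coeff_one]
  match n with
  | 0 => norm_num [aSeq]
  | 1 => norm_num [aSeq]
  | 2 => norm_num [show ((2:ℕ)) - 1 = 1 from rfl, aSeq]
  | (k+3) =>
    have h1 : (1:ℕ) ≤ k + 3 := by omega
    have h2 : (2:ℕ) ≤ k + 3 := by omega
    have h3 : (3:ℕ) ≤ k + 3 := by omega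
    rw [if_pos h1, if_pos h2, if_pos h3, if_neg (by omega : ¬ k + 3 = 0)]
    have e1 : k + 3 - 1 = k + 2 := by omega
    have e2 : k + 3 - 2 = k + 1 := by omega
    have e3 : k + 3 - 3 = k := by omega
    rw [e1, e2, e3]
    have := aSeq_rec k
    linarith

/-- If `H(z) = 1 + 6z + 6z² + 2z³`, then the formal power series
`1/H(−z) = 1/(1 − 6z + 6z² − 2z³)` has all coefficients positive integers. -/
theorem stmt_1 :
    ∀ n : ℕ, ∃ m : ℕ, 0 < m ∧
      (PowerSeries.coeff n)
        ((1 - 6 * PowerSeries.X + 6 * PowerSeries.X ^ 2 - 2 * PowerSeries.X ^ 3 :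
          PowerSeries ℚ)⁻¹) = m := by
  intro n
  refine ⟨aSeq n, aSeq_pos n, ?_⟩
  rw [inv_eq, PowerSeries.coeff_mk]
end

section
/- If R(z) = 1 + 5z + 7z² and 1/R^!(z) = ∏_{n≥1} (1−z^{2n−1})⁵(1−z^{2n})³, then the first coefficients of R^!(z) agree with those of 1/R(−z) up to degree 2 but differ in some higher degree; in particular R^!(z) is not equal to 1/R(−z) as formal power series. -/
open PowerSeries

set_option maxHeartbeats 1000000

private lemma onum9 (n : ℕ) [n.AtLeastTwo] :
    (OfNat.ofNat n : PowerSeries ℚ) = C (R := ℚ) (OfNat.ofNat n) := by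
  simp [map_ofNat]

private lemma cong_mul9 {R : Type*} [CommRing R] {d x y u v : R}
    (h1 : d ∣ x - y) (h2 : d ∣ u - v) : d ∣ x * u - y * v := by
  have h : x * u - y * v = x * (u - v) + (x - y) * v := by ring
  rw [h]
  exact dvd_add (h2.mul_left x) (h1.mul_right v)

private lemma inv_step9 (φ : PowerSeries ℚ) (h : constantCoeff (R := ℚ) φ ≠ 0) (n : ℕ) :
    ∑ i ∈ Finset.range (n + 1), (coeff (R := ℚ) i) φ * (coeff (R := ℚ) (n - i)) φ⁻¹ =
      if n = 0 then 1 else 0 := by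
  have h1 : (coeff (R := ℚ) n) (φ * φ⁻¹) =
      ∑ i ∈ Finset.range (n + 1), (coeff (R := ℚ) i) φ * (coeff (R := ℚ) (n - i)) φ⁻¹ := by
    rw [coeff_mul, Finset.Nat.sum_antidiagonal_eq_sum_range_succ_mk]
  rw [← h1, PowerSeries.mul_inv_cancel _ h, coeff_one]

/-- Let `f` be the infinite product `∏_{n≥1} (1−z^{2n−1})⁵(1−z^{2n})³`, characterized
by agreement with its partial products in low degrees, and let `R(z) = 1 + 5z + 7z²`.
Then the coefficients of `R^!(z) = 1/f(z)` agree with those of `1/R(−z)` in degrees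
`≤ 2`, but the two power series differ in some higher degree; in particular
`R^!(z) ≠ 1/R(−z)`. -/
theorem stmt_9 (f : PowerSeries ℚ)
    (hf : ∀ k N : ℕ, k ≤ N →
      (PowerSeries.coeff (R := ℚ) k) f =
        (PowerSeries.coeff (R := ℚ) k)
          (∏ n ∈ Finset.range N, (1 - X ^ (2*n+1))^5 * (1 - X ^ (2*n+2))^3)) :
    ((PowerSeries.coeff (R := ℚ) 0) f⁻¹ =
        (PowerSeries.coeff (R := ℚ) 0) ((1 - 5*X + 7*X^2 : PowerSeries ℚ)⁻¹)) ∧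
    ((PowerSeries.coeff (R := ℚ) 1) f⁻¹ =
        (PowerSeries.coeff (R := ℚ) 1) ((1 - 5*X + 7*X^2 : PowerSeries ℚ)⁻¹)) ∧
    ((PowerSeries.coeff (R := ℚ) 2) f⁻¹ =
        (PowerSeries.coeff (R := ℚ) 2) ((1 - 5*X + 7*X^2 : PowerSeries ℚ)⁻¹)) ∧
    (∃ k : ℕ, 3 ≤ k ∧ (PowerSeries.coeff (R := ℚ) k) f⁻¹ ≠
        (PowerSeries.coeff (R := ℚ) k) ((1 - 5*X + 7*X^2 : PowerSeries ℚ)⁻¹)) ∧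
    f⁻¹ ≠ (1 - 5*X + 7*X^2 : PowerSeries ℚ)⁻¹ := by
  set g : PowerSeries ℚ := 1 - 5*X + 7*X^2 with hg
  -- the truncation of the product modulo X^6
  set Q : PowerSeries ℚ :=
    ((1 - X)^5 * (1 - X^2)^3) * ((1 - 5*X^3) * (1 - 3*X^4)) * ((1 - 5*X^5) * 1) * (1 * 1) * (1 * 1)
    with hQ
  have hdvd : (X : PowerSeries ℚ)^6 ∣
      (∏ n ∈ Finset.range 5, (1 - X ^ (2*n+1))^5 * (1 - X ^ (2*n+2))^3) - Q := by
    have c1 : (X : PowerSeries ℚ)^6 ∣ (1 - X^3)^5 - (1 - 5*X^3) :=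
      ⟨10 - 10*X^3 + 5*X^6 - X^9, by ring⟩
    have c2 : (X : PowerSeries ℚ)^6 ∣ (1 - X^4)^3 - (1 - 3*X^4) := ⟨3*X^2 - X^6, by ring⟩
    have c3 : (X : PowerSeries ℚ)^6 ∣ (1 - X^5)^5 - (1 - 5*X^5) :=
      ⟨10*X^4 - 10*X^9 + 5*X^14 - X^19, by ring⟩
    have c4 : (X : PowerSeries ℚ)^6 ∣ (1 - X^6)^3 - 1 := ⟨-3 + 3*X^6 - X^12, by ring⟩
    have c5 : (X : PowerSeries ℚ)^6 ∣ (1 - X^7)^5 - 1 :=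
      ⟨-5*X + 10*X^8 - 10*X^15 + 5*X^22 - X^29, by ring⟩
    have c6 : (X : PowerSeries ℚ)^6 ∣ (1 - X^8)^3 - 1 := ⟨-3*X^2 + 3*X^10 - X^18, by ring⟩
    have c7 : (X : PowerSeries ℚ)^6 ∣ (1 - X^9)^5 - 1 :=
      ⟨-5*X^3 + 10*X^12 - 10*X^21 + 5*X^30 - X^39, by ring⟩
    have c8 : (X : PowerSeries ℚ)^6 ∣ (1 - X^10)^3 - 1 := ⟨-3*X^4 + 3*X^14 - X^24, by ring⟩
    have c0 : (X : PowerSeries ℚ)^6 ∣ (1 - X)^5 * (1 - X^2)^3 - (1 - X)^5 * (1 - X^2)^3 := by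
      simp
    have key := cong_mul9 (cong_mul9 (cong_mul9 (cong_mul9 c0 (cong_mul9 c1 c2))
      (cong_mul9 c3 c4)) (cong_mul9 c5 c6)) (cong_mul9 c7 c8)
    simp only [mul_one, one_mul] at key
    simp only [Finset.prod_range_succ, Finset.prod_range_zero, one_mul, mul_one, hQ,
      Nat.reduceMul, Nat.reduceAdd, pow_one]
    exact key
  -- coefficients of f in degrees ≤ 5 equal those of Q
  have hfQ : ∀ k : ℕ, k ≤ 5 → (coeff (R := ℚ) k) f = (coeff (R := ℚ) k) Q := by
    intro k hk
    have h0 := (PowerSeries.X_pow_dvd_iff.mp hdvd) k (by omega)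
    rw [map_sub, sub_eq_zero] at h0
    rw [hf k 5 hk, h0]
  have hQexp : Q = 1 - 5*X + 7*X^2 - 11*X^5 - 7*X^6 + 53*X^7 - 74*X^8 + 168*X^10
      - 128*X^11 - 280*X^12 + 584*X^13 - 320*X^14 - 618*X^15 + 1545*X^16 - 875*X^17
      - 1055*X^18 + 1600*X^19 - 360*X^20 - 525*X^21 + 375*X^22 - 75*X^23 := by
    rw [hQ]; ring
  have cf0 : (coeff (R := ℚ) 0) f = 1 := by
    rw [hfQ 0 (by norm_num), hQexp]; simp [onum9, coeff_C_mul, coeff_X_pow]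
  have cf1 : (coeff (R := ℚ) 1) f = -5 := by
    rw [hfQ 1 (by norm_num), hQexp]; simp [onum9, coeff_C_mul, coeff_X_pow]
  have cf2 : (coeff (R := ℚ) 2) f = 7 := by
    rw [hfQ 2 (by norm_num), hQexp]; simp [onum9, coeff_C_mul, coeff_X_pow]
  have cf3 : (coeff (R := ℚ) 3) f = 0 := by
    rw [hfQ 3 (by norm_num), hQexp]; simp [onum9, coeff_C_mul, coeff_X_pow]
  have cf4 : (coeff (R := ℚ) 4) f = 0 := by
    rw [hfQ 4 (by norm_num), hQexp]; simp [onum9, coeff_C_mul, coeff_X_pow]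
  have cf5 : (coeff (R := ℚ) 5) f = -11 := by
    rw [hfQ 5 (by norm_num), hQexp]; simp [onum9, coeff_C_mul, coeff_X_pow]
  -- coefficients of g
  have cg0 : (coeff (R := ℚ) 0) g = 1 := by rw [hg]; simp [onum9, coeff_C_mul, coeff_X_pow]
  have cg1 : (coeff (R := ℚ) 1) g = -5 := by rw [hg]; simp [onum9, coeff_C_mul, coeff_X_pow]
  have cg2 : (coeff (R := ℚ) 2) g = 7 := by rw [hg]; simp [onum9, coeff_C_mul, coeff_X_pow]
  have cg3 : (coeff (R := ℚ) 3) g = 0 := by rw [hg]; simp [onum9, coeff_C_mul, coeff_X_pow]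
  have cg4 : (coeff (R := ℚ) 4) g = 0 := by rw [hg]; simp [onum9, coeff_C_mul, coeff_X_pow]
  have cg5 : (coeff (R := ℚ) 5) g = 0 := by rw [hg]; simp [onum9, coeff_C_mul, coeff_X_pow]
  have hfc : constantCoeff (R := ℚ) f ≠ 0 := by
    rw [← PowerSeries.coeff_zero_eq_constantCoeff, cf0]; norm_num
  have hgc : constantCoeff (R := ℚ) g ≠ 0 := by
    rw [← PowerSeries.coeff_zero_eq_constantCoeff, cg0]; norm_num
  -- coefficients of f⁻¹
  have u0 : (coeff (R := ℚ) 0) f⁻¹ = 1 := by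
    have e := inv_step9 f hfc 0
    simp only [Finset.sum_range_succ, Finset.sum_range_zero, if_pos rfl, zero_add, cf0] at e
    simpa using e
  have u1 : (coeff (R := ℚ) 1) f⁻¹ = 5 := by
    have e := inv_step9 f hfc 1
    simp only [Finset.sum_range_succ, Finset.sum_range_zero] at e
    norm_num [cf0, cf1, u0] at e; linarith
  have u2 : (coeff (R := ℚ) 2) f⁻¹ = 18 := by
    have e := inv_step9 f hfc 2
    simp only [Finset.sum_range_succ, Finset.sum_range_zero] at e
    norm_num [cf0, cf1, cf2, u0, u1] at e; linarith
  have u3 : (coeff (R := ℚ) 3) f⁻¹ = 55 := by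
    have e := inv_step9 f hfc 3
    simp only [Finset.sum_range_succ, Finset.sum_range_zero] at e
    norm_num [cf0, cf1, cf2, cf3, u0, u1, u2] at e; linarith
  have u4 : (coeff (R := ℚ) 4) f⁻¹ = 149 := by
    have e := inv_step9 f hfc 4
    simp only [Finset.sum_range_succ, Finset.sum_range_zero] at e
    norm_num [cf0, cf1, cf2, cf3, cf4, u0, u1, u2, u3] at e; linarith
  have u5 : (coeff (R := ℚ) 5) f⁻¹ = 371 := by
    have e := inv_step9 f hfc 5
    simp only [Finset.sum_range_succ, Finset.sum_range_zero] at e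
    norm_num [cf0, cf1, cf2, cf3, cf4, cf5, u0, u1, u2, u3, u4] at e; linarith
  -- coefficients of g⁻¹
  have v0 : (coeff (R := ℚ) 0) g⁻¹ = 1 := by
    have e := inv_step9 g hgc 0
    simp only [Finset.sum_range_succ, Finset.sum_range_zero, if_pos rfl, zero_add, cg0] at e
    simpa using e
  have v1 : (coeff (R := ℚ) 1) g⁻¹ = 5 := by
    have e := inv_step9 g hgc 1
    simp only [Finset.sum_range_succ, Finset.sum_range_zero] at e
    norm_num [cg0, cg1, v0] at e; linarith
  have v2 : (coeff (R := ℚ) 2) g⁻¹ = 18 := by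
    have e := inv_step9 g hgc 2
    simp only [Finset.sum_range_succ, Finset.sum_range_zero] at e
    norm_num [cg0, cg1, cg2, v0, v1] at e; linarith
  have v3 : (coeff (R := ℚ) 3) g⁻¹ = 55 := by
    have e := inv_step9 g hgc 3
    simp only [Finset.sum_range_succ, Finset.sum_range_zero] at e
    norm_num [cg0, cg1, cg2, cg3, v0, v1, v2] at e; linarith
  have v4 : (coeff (R := ℚ) 4) g⁻¹ = 149 := by
    have e := inv_step9 g hgc 4
    simp only [Finset.sum_range_succ, Finset.sum_range_zero] at e
    norm_num [cg0, cg1, cg2, cg3, cg4, v0, v1, v2, v3] at e; linarith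
  have v5 : (coeff (R := ℚ) 5) g⁻¹ = 360 := by
    have e := inv_step9 g hgc 5
    simp only [Finset.sum_range_succ, Finset.sum_range_zero] at e
    norm_num [cg0, cg1, cg2, cg3, cg4, cg5, v0, v1, v2, v3, v4] at e; linarith
  have hne5 : (coeff (R := ℚ) 5) f⁻¹ ≠ (coeff (R := ℚ) 5) g⁻¹ := by rw [u5, v5]; norm_num
  refine ⟨by rw [u0, v0], by rw [u1, v1], by rw [u2, v2], ⟨5, by norm_num, hne5⟩, ?_⟩
  intro h
  exact hne5 (by rw [h])
end

section
/- The formal power series f(z) = 1/((1−2z)²·∏_{n≥1}(1−zⁿ)) satisfies: f is not a rational function of z; equivalently, ∏_{n≥1}(1−zⁿ) is not a rational function. -/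
open PowerSeries

/-- A formal power series `g` over `ℚ` is rational if `g = p/q` for polynomials
`p, q` with `q(0) ≠ 0`. -/
def IsRationalPS (g : PowerSeries ℚ) : Prop :=
  ∃ p q : Polynomial ℚ, q.coeff 0 ≠ 0 ∧ (q : PowerSeries ℚ) * g = (p : PowerSeries ℚ)

namespace Stmt10Aux

open Polynomial Finset

noncomputable def Pp (N : ℕ) : Polynomial ℝ := ∏ n ∈ Finset.range N, (1 - Polynomial.X ^ (n+1))
noncomputable def Qp (N : ℕ) : Polynomial ℝ := ∏ n ∈ Finset.range N, (1 + Polynomial.X ^ (n+1))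

lemma Pp_succ (N : ℕ) : Pp (N+1) = Pp N * (1 - Polynomial.X ^ (N+1)) := Finset.prod_range_succ _ _
lemma Qp_succ (N : ℕ) : Qp (N+1) = Qp N * (1 + Polynomial.X ^ (N+1)) := Finset.prod_range_succ _ _

lemma coeff_mul_one_sub (f : Polynomial ℝ) (k n : ℕ) :
    (f * (1 - Polynomial.X ^ k)).coeff n = f.coeff n - (if k ≤ n then f.coeff (n - k) else 0) := by
  rw [mul_sub, mul_one, Polynomial.coeff_sub, Polynomial.coeff_mul_X_pow']

lemma coeff_mul_one_add (f : Polynomial ℝ) (k n : ℕ) :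
    (f * (1 + Polynomial.X ^ k)).coeff n = f.coeff n + (if k ≤ n then f.coeff (n - k) else 0) := by
  rw [mul_add, mul_one, Polynomial.coeff_add, Polynomial.coeff_mul_X_pow']

lemma Qp_coeff_nonneg (N n : ℕ) : 0 ≤ (Qp N).coeff n := by
  induction N generalizing n with
  | zero =>
    simp only [Qp, Finset.range_zero, Finset.prod_empty, Polynomial.coeff_one]
    split <;> norm_num
  | succ N ih =>
    rw [Qp_succ, coeff_mul_one_add]
    have h1 := ih n
    have h2 : (0:ℝ) ≤ if N+1 ≤ n then (Qp N).coeff (n - (N+1)) else 0 := by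
      split
      · exact ih _
      · exact le_rfl
    positivity

lemma abs_Pp_coeff_le (N n : ℕ) : |(Pp N).coeff n| ≤ (Qp N).coeff n := by
  induction N generalizing n with
  | zero =>
    simp only [Pp, Qp, Finset.range_zero, Finset.prod_empty, Polynomial.coeff_one]
    split <;> simp
  | succ N ih =>
    rw [Pp_succ, Qp_succ, coeff_mul_one_sub, coeff_mul_one_add, sub_eq_add_neg]
    refine (abs_add_le _ _).trans ?_
    rw [abs_neg]
    gcongr
    · exact ih n
    · split
      · exact ih _
      · simp

lemma Qp_coeff_mono {N M : ℕ} (h : N ≤ M) (n : ℕ) : (Qp N).coeff n ≤ (Qp M).coeff n := by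
  induction M, h using Nat.le_induction with
  | base => exact le_rfl
  | succ M hM ih =>
    rw [Qp_succ, coeff_mul_one_add]
    have h2 : (0:ℝ) ≤ if M+1 ≤ n then (Qp M).coeff (n - (M+1)) else 0 := by
      split
      · exact Qp_coeff_nonneg _ _
      · exact le_rfl
    linarith

lemma Qp_coeff_stab {n N : ℕ} (h : n ≤ N) : (Qp N).coeff n = (Qp n).coeff n := by
  induction N, h using Nat.le_induction with
  | base => rfl
  | succ N hN ih =>
    rw [Qp_succ, coeff_mul_one_add, if_neg (by omega), add_zero, ih]

lemma Qp_coeff_le_b (N n : ℕ) : (Qp N).coeff n ≤ (Qp n).coeff n := by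
  rcases le_or_gt N n with h | h
  · exact Qp_coeff_mono h n
  · exact (Qp_coeff_stab h.le).le

lemma Qp_eval (N : ℕ) (x : ℝ) : (Qp N).eval x = ∏ i ∈ Finset.range N, (1 + x^(i+1)) := by
  simp [Qp, Polynomial.eval_prod]

lemma Pp_eval (N : ℕ) (x : ℝ) : (Pp N).eval x = ∏ i ∈ Finset.range N, (1 - x^(i+1)) := by
  simp [Pp, Polynomial.eval_prod]

lemma sum_b_le (x : ℝ) (hx0 : 0 ≤ x) (hx1 : x < 1) (M : ℕ) :
    ∑ n ∈ Finset.range M, (Qp n).coeff n * x^n ≤ Real.exp (x * (1-x)⁻¹) := by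
  have h1 : ∑ n ∈ Finset.range M, (Qp n).coeff n * x^n
      = ∑ n ∈ Finset.range M, (Qp M).coeff n * x^n := by
    refine Finset.sum_congr rfl fun i hi => ?_
    rw [Qp_coeff_stab (Finset.mem_range.mp hi).le]
  have h2 : ∑ n ∈ Finset.range M, (Qp M).coeff n * x^n ≤ (Qp M).eval x := by
    have hK : (Qp M).natDegree < max M ((Qp M).natDegree + 1) :=
      lt_of_lt_of_le (Nat.lt_succ_self _) (le_max_right _ _)
    rw [Polynomial.eval_eq_sum_range' hK]
    refine Finset.sum_le_sum_of_subset_of_nonneg ?_ fun i _ _ => ?_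
    · exact Finset.range_subset_range.mpr (le_max_left _ _)
    · exact mul_nonneg (Qp_coeff_nonneg _ _) (pow_nonneg hx0 _)
  have h3 : (Qp M).eval x ≤ Real.exp (x * (1-x)⁻¹) := by
    rw [Qp_eval]
    calc ∏ i ∈ Finset.range M, (1 + x^(i+1))
        ≤ ∏ i ∈ Finset.range M, Real.exp (x^(i+1)) := by
          refine Finset.prod_le_prod (fun i _ => by positivity) (fun i _ => ?_)
          have := Real.add_one_le_exp (x^(i+1)); linarith
      _ = Real.exp (∑ i ∈ Finset.range M, x^(i+1)) := (Real.exp_sum _ _).symm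
      _ ≤ Real.exp (x * (1-x)⁻¹) := by
          apply Real.exp_le_exp.mpr
          have hsum : ∑ i ∈ Finset.range M, x^(i+1) = x * ∑ i ∈ Finset.range M, x^i := by
            rw [Finset.mul_sum]; exact Finset.sum_congr rfl fun i _ => by ring
          rw [hsum]
          have hg : ∑ i ∈ Finset.range M, x^i ≤ (1-x)⁻¹ := by
            have := (summable_geometric_of_lt_one hx0 hx1).sum_le_tsum (Finset.range M) (fun i _ => pow_nonneg hx0 i)
            rwa [tsum_geometric_of_lt_one hx0 hx1] at this
          exact mul_le_mul_of_nonneg_left hg hx0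
  linarith

lemma summable_b (x : ℝ) (hx0 : 0 ≤ x) (hx1 : x < 1) :
    Summable (fun n => (Qp n).coeff n * x^n) :=
  summable_of_sum_range_le
    (fun n => mul_nonneg (Qp_coeff_nonneg n n) (pow_nonneg hx0 n)) (sum_b_le x hx0 hx1)

lemma one_sub_pow_le (x : ℝ) (hx0 : 0 ≤ x) (hx1 : x ≤ 1) (m : ℕ) : 1 - x^m ≤ m * (1-x) := by
  induction m with
  | zero => simp
  | succ m ih =>
    have hp : 0 ≤ x^m := pow_nonneg hx0 m
    have hp1 : x^m ≤ 1 := pow_le_one₀ hx0 hx1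
    have hmn : (0:ℝ) ≤ (m:ℝ) * (1-x) := mul_nonneg (Nat.cast_nonneg m) (by linarith)
    have hmul := mul_le_mul_of_nonneg_left ih hx0
    push_cast
    rw [pow_succ]
    nlinarith

lemma Pp_eval_nonneg (x : ℝ) (hx0 : 0 ≤ x) (hx1 : x ≤ 1) (N : ℕ) : 0 ≤ (Pp N).eval x := by
  rw [Pp_eval]
  refine Finset.prod_nonneg fun i _ => ?_
  have := pow_le_one₀ hx0 hx1 (n := i+1); linarith

lemma Pp_eval_anti (x : ℝ) (hx0 : 0 ≤ x) (hx1 : x ≤ 1) {m N : ℕ} (h : m ≤ N) :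
    (Pp N).eval x ≤ (Pp m).eval x := by
  induction N, h using Nat.le_induction with
  | base => exact le_rfl
  | succ N hN ih =>
    rw [Pp_succ, Polynomial.eval_mul]
    have h1 : (1 - Polynomial.X ^ (N+1) : Polynomial ℝ).eval x ≤ 1 := by
      simp only [Polynomial.eval_sub, Polynomial.eval_one, Polynomial.eval_pow, Polynomial.eval_X]
      have := pow_nonneg hx0 (N+1); linarith
    have h2 : 0 ≤ (1 - Polynomial.X ^ (N+1) : Polynomial ℝ).eval x := by
      simp only [Polynomial.eval_sub, Polynomial.eval_one, Polynomial.eval_pow, Polynomial.eval_X]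
      have := pow_le_one₀ hx0 hx1 (n := N+1); linarith
    calc (Pp N).eval x * (1 - Polynomial.X ^ (N+1) : Polynomial ℝ).eval x
        ≤ (Pp N).eval x * 1 := by gcongr; exact Pp_eval_nonneg x hx0 hx1 N
      _ = (Pp N).eval x := mul_one _
      _ ≤ (Pp m).eval x := ih

lemma Pp_eval_le_pow (x : ℝ) (hx0 : 0 ≤ x) (hx1 : x ≤ 1) (m : ℕ) :
    (Pp m).eval x ≤ (∏ i ∈ Finset.range m, ((i:ℝ)+1)) * (1-x)^m := by
  have h2 : (∏ i ∈ Finset.range m, ((i:ℝ)+1)) * (1-x)^m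
      = ∏ i ∈ Finset.range m, (((i:ℝ)+1) * (1-x)) := by
    rw [Finset.prod_mul_distrib, Finset.prod_const, Finset.card_range]
  rw [Pp_eval, h2]
  refine Finset.prod_le_prod (fun i _ => ?_) (fun i _ => ?_)
  · have := pow_le_one₀ hx0 hx1 (n := i+1); linarith
  · have := one_sub_pow_le x hx0 hx1 (i+1); push_cast at this ⊢; linarith

lemma coeff_cast (N k : ℕ) :
    (((PowerSeries.coeff (R := ℚ) k)
        (∏ n ∈ Finset.range N, (1 - (PowerSeries.X : PowerSeries ℚ) ^ (n+1))) : ℚ) : ℝ)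
      = (Pp N).coeff k := by
  have h1 : (∏ n ∈ Finset.range N, (1 - (PowerSeries.X : PowerSeries ℚ) ^ (n+1)))
      = ((∏ n ∈ Finset.range N, (1 - Polynomial.X ^ (n+1)) : Polynomial ℚ) : PowerSeries ℚ) := by
    rw [← Polynomial.coeToPowerSeries.ringHom_apply, map_prod]
    refine (Finset.prod_congr rfl fun i _ => ?_).symm
    simp [Polynomial.coeToPowerSeries.ringHom_apply]
  rw [h1, Polynomial.coeff_coe]
  have h2 : Pp N = (∏ n ∈ Finset.range N, (1 - Polynomial.X ^ (n+1)) : Polynomial ℚ).map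
      (Rat.castHom ℝ) := by
    rw [Polynomial.map_prod]
    exact Finset.prod_congr rfl fun i _ => by simp
  rw [h2, Polynomial.coeff_map]
  simp

/-- The main analytic estimate. -/
lemma main_est (e : ℕ → ℝ)
    (hePp : ∀ k N : ℕ, k ≤ N → e k = (Pp N).coeff k)
    (qR pR : Polynomial ℝ)
    (hconv : ∀ n, ∑ kl ∈ Finset.HasAntidiagonal.antidiagonal n, qR.coeff kl.1 * e kl.2 = pR.coeff n)
    (x : ℝ) (hx0 : 0 < x) (hx1 : x < 1) (m : ℕ) :
    |pR.eval x| ≤ (∑ i ∈ Finset.range (qR.natDegree+1), |qR.coeff i|) * (Pp m).eval x := by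
  have habs : ∀ N n : ℕ, |(Pp N).coeff n| ≤ (Qp n).coeff n :=
    fun N n => (abs_Pp_coeff_le N n).trans (Qp_coeff_le_b N n)
  have hx0' : (0:ℝ) ≤ x := hx0.le
  have hx1' : x ≤ 1 := hx1.le
  have heb : ∀ n, |e n| ≤ (Qp n).coeff n := fun n => by
    rw [hePp n n le_rfl]; exact habs n n
  have Sb : Summable (fun n => (Qp n).coeff n * x^n) := summable_b x hx0' hx1
  have hle : ∀ n, |e n * x^n| ≤ (Qp n).coeff n * x^n := fun n => by
    rw [abs_mul, abs_pow, abs_of_nonneg hx0']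
    exact mul_le_mul_of_nonneg_right (heb n) (pow_nonneg hx0' n)
  have Seabs : Summable (fun n => |e n * x^n|) :=
    Summable.of_nonneg_of_le (fun n => abs_nonneg _) hle Sb
  have Se : Summable (fun n => e n * x^n) := Seabs.of_abs
  set S := ∑' n, e n * x^n with hS
  -- Cauchy product
  have hq_supp : ∀ i ∉ Finset.range (qR.natDegree+1), qR.coeff i * x^i = 0 := fun i hi => by
    rw [Polynomial.coeff_eq_zero_of_natDegree_lt (by simpa using Finset.mem_range.not.mp hi),
      zero_mul]
  have hu_norm : Summable (fun i => ‖qR.coeff i * x^i‖) :=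
    summable_of_ne_finset_zero (s := Finset.range (qR.natDegree+1))
      (fun i hi => by rw [hq_supp i hi, norm_zero])
  have hv_norm : Summable (fun n => ‖e n * x^n‖) := by
    simpa only [Real.norm_eq_abs] using Seabs
  have cauchy := tsum_mul_tsum_eq_tsum_sum_antidiagonal_of_summable_norm hu_norm hv_norm
  have h1 : ∑' i, qR.coeff i * x^i = qR.eval x := by
    rw [tsum_eq_sum hq_supp, Polynomial.eval_eq_sum_range]
  have h2 : ∀ n, ∑ kl ∈ Finset.HasAntidiagonal.antidiagonal n, (qR.coeff kl.1 * x^kl.1) * (e kl.2 * x^kl.2)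
      = pR.coeff n * x^n := by
    intro n
    rw [← hconv n, Finset.sum_mul]
    refine Finset.sum_congr rfl fun kl hkl => ?_
    have hn : kl.1 + kl.2 = n := Finset.HasAntidiagonal.mem_antidiagonal.mp hkl
    rw [← hn, pow_add]; ring
  have hp_supp : ∀ i ∉ Finset.range (pR.natDegree+1), pR.coeff i * x^i = 0 := fun i hi => by
    rw [Polynomial.coeff_eq_zero_of_natDegree_lt (by simpa using Finset.mem_range.not.mp hi),
      zero_mul]
  have h3 : ∑' n, pR.coeff n * x^n = pR.eval x := by
    rw [tsum_eq_sum hp_supp, Polynomial.eval_eq_sum_range]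
  have hqS : qR.eval x * S = pR.eval x := by
    rw [← h1, ← h3, hS, cauchy]
    exact tsum_congr h2
  -- tail bound: |S| ≤ (Pp m).eval x
  set g : ℕ → ℝ := fun n => 2 * ((Qp n).coeff n * x^n) with hg
  have Sg : Summable g := Sb.mul_left 2
  have hgnn : ∀ n, 0 ≤ g n := fun n =>
    mul_nonneg (by norm_num) (mul_nonneg (Qp_coeff_nonneg n n) (pow_nonneg hx0' n))
  have tail : ∀ N, m ≤ N →
      |S| ≤ (Pp m).eval x + (∑' n, g n - ∑ n ∈ Finset.range (N+1), g n) := by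
    intro N hN
    have hP_supp : ∀ n ∉ Finset.range ((Pp N).natDegree+1), (Pp N).coeff n * x^n = 0 :=
      fun n hn => by
        rw [Polynomial.coeff_eq_zero_of_natDegree_lt (by simpa using Finset.mem_range.not.mp hn),
          zero_mul]
    have hPsum : Summable (fun n => (Pp N).coeff n * x^n) :=
      summable_of_ne_finset_zero (s := Finset.range ((Pp N).natDegree+1)) hP_supp
    have hPeval : ∑' n, (Pp N).coeff n * x^n = (Pp N).eval x := by
      rw [tsum_eq_sum hP_supp, Polynomial.eval_eq_sum_range]
    have hdiff : S - (Pp N).eval x = ∑' n, (e n - (Pp N).coeff n) * x^n := by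
      rw [← hPeval, ← Se.tsum_sub hPsum]
      exact tsum_congr fun n => by ring
    have hd0 : ∀ n, n ≤ N → (e n - (Pp N).coeff n) * x^n = 0 := fun n hn => by
      rw [hePp n N hn, sub_self, zero_mul]
    have hdle : ∀ n, |(e n - (Pp N).coeff n) * x^n| ≤ (if n ≤ N then 0 else g n) := by
      intro n
      by_cases h : n ≤ N
      · rw [hd0 n h, abs_zero, if_pos h]
      · rw [if_neg h, abs_mul, abs_pow, abs_of_nonneg hx0', hg]
        have hb1 : |e n - (Pp N).coeff n| ≤ 2 * (Qp n).coeff n := by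
          have hb2 := heb n
          have hb3 := habs N n
          calc |e n - (Pp N).coeff n| ≤ |e n| + |(Pp N).coeff n| := abs_sub _ _
            _ ≤ 2 * (Qp n).coeff n := by linarith
        calc |e n - (Pp N).coeff n| * x^n ≤ (2 * (Qp n).coeff n) * x^n :=
              mul_le_mul_of_nonneg_right hb1 (pow_nonneg hx0' n)
          _ = 2 * ((Qp n).coeff n * x^n) := by ring
    have hif_sum : Summable (fun n => if n ≤ N then 0 else g n) :=
      Summable.of_nonneg_of_le (fun n => by split; exacts [le_rfl, hgnn n])
        (fun n => by split; exacts [hgnn n, le_rfl]) Sg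
    have hdabs : Summable (fun n => |(e n - (Pp N).coeff n) * x^n|) :=
      Summable.of_nonneg_of_le (fun n => abs_nonneg _) hdle hif_sum
    have hdnorm : Summable (fun n => ‖(e n - (Pp N).coeff n) * x^n‖) := by
      simpa only [Real.norm_eq_abs] using hdabs
    have h4a := norm_tsum_le_tsum_norm hdnorm
    simp only [Real.norm_eq_abs] at h4a
    have h4 : |S - (Pp N).eval x| ≤ ∑' n, (if n ≤ N then 0 else g n) := by
      rw [hdiff]
      exact h4a.trans (hdabs.tsum_le_tsum hdle hif_sum)
    have h5 : ∑' n, (if n ≤ N then 0 else g n) = ∑' n, g n - ∑ n ∈ Finset.range (N+1), g n := by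
      have he : ∀ n, (if n ≤ N then 0 else g n) = g n - (if n ≤ N then g n else 0) := by
        intro n; split <;> simp
      have hif2 : Summable (fun n => if n ≤ N then g n else 0) :=
        summable_of_ne_finset_zero (s := Finset.range (N+1))
          (fun n hn => if_neg (by simpa using Finset.mem_range.not.mp hn))
      rw [tsum_congr he, Sg.tsum_sub hif2]
      congr 1
      rw [tsum_eq_sum (s := Finset.range (N+1))
        (fun n hn => if_neg (by simpa using Finset.mem_range.not.mp hn))]
      exact Finset.sum_congr rfl fun n hn =>
        if_pos (by simpa [Nat.lt_succ_iff] using Finset.mem_range.mp hn)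
    have h6 : |S| ≤ |S - (Pp N).eval x| + (Pp N).eval x := by
      have := abs_add_le (S - (Pp N).eval x) ((Pp N).eval x)
      simpa [abs_of_nonneg (Pp_eval_nonneg x hx0' hx1' N)] using this
    have h7 : (Pp N).eval x ≤ (Pp m).eval x := Pp_eval_anti x hx0' hx1' hN
    linarith [h4, h5, h6, h7]
  have hSle : |S| ≤ (Pp m).eval x := by
    refine le_of_forall_pos_le_add fun ε hε => ?_
    have htend : Filter.Tendsto (fun k => ∑ n ∈ Finset.range k, g n) Filter.atTop
        (nhds (∑' n, g n)) := Sg.hasSum.tendsto_sum_nat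
    have hev : ∀ᶠ k in Filter.atTop, ∑' n, g n - ∑ n ∈ Finset.range k, g n < ε := by
      have := htend.eventually (eventually_gt_nhds (by linarith : (∑' n, g n) - ε < ∑' n, g n))
      filter_upwards [this] with k hk
      linarith
    obtain ⟨K, hK⟩ := hev.exists_forall_of_atTop
    have htail := tail (max m K) (le_max_left _ _)
    have h8 := hK (max m K + 1) (le_trans (le_max_right m K) (Nat.le_succ _))
    linarith
  have hqb : |qR.eval x| ≤ ∑ i ∈ Finset.range (qR.natDegree+1), |qR.coeff i| := by
    rw [Polynomial.eval_eq_sum_range]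
    refine (Finset.abs_sum_le_sum_abs _ _).trans ?_
    refine Finset.sum_le_sum fun i _ => ?_
    rw [abs_mul, abs_pow, abs_of_nonneg hx0']
    calc |qR.coeff i| * x^i ≤ |qR.coeff i| * 1 :=
          mul_le_mul_of_nonneg_left (pow_le_one₀ hx0' hx1') (abs_nonneg _)
      _ = |qR.coeff i| := mul_one _
  calc |pR.eval x| = |qR.eval x * S| := by rw [hqS]
    _ = |qR.eval x| * |S| := abs_mul _ _
    _ ≤ (∑ i ∈ Finset.range (qR.natDegree+1), |qR.coeff i|) * (Pp m).eval x :=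
        mul_le_mul hqb hSle (abs_nonneg _) (Finset.sum_nonneg fun i _ => abs_nonneg _)

/-- A nonzero real polynomial cannot vanish faster than every power of `(1-x)` at `1`. -/
lemma poly_zero (pR : Polynomial ℝ) (C : ℝ) (hC : 0 ≤ C)
    (main : ∀ x : ℝ, 0 < x → x < 1 → ∀ m, |pR.eval x| ≤ C * (Pp m).eval x) :
    pR = 0 := by
  by_contra hp0
  set M := pR.rootMultiplicity 1 with hM
  set u := pR /ₘ (Polynomial.X - Polynomial.C 1) ^ M with hu
  have hfac := Polynomial.pow_mul_divByMonic_rootMultiplicity_eq pR 1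
  have hu1 : u.eval 1 ≠ 0 := Polynomial.eval_divByMonic_pow_rootMultiplicity_ne_zero 1 hp0
  set Cm := ∏ i ∈ Finset.range (M+1), ((i:ℝ)+1) with hCm
  have hub : ∀ x : ℝ, 0 < x → x < 1 → |u.eval x| ≤ C * Cm * (1 - x) := by
    intro x hx0 hx1
    have h1 := main x hx0 hx1 (M+1)
    have h2 := Pp_eval_le_pow x hx0.le hx1.le (M+1)
    have h3 : pR.eval x = (x - 1)^M * u.eval x := by
      conv_lhs => rw [← hfac]
      simp [Polynomial.eval_mul, Polynomial.eval_pow, hu, hM]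
    have h4 : |pR.eval x| = (1-x)^M * |u.eval x| := by
      rw [h3, abs_mul, abs_pow, abs_sub_comm, abs_of_nonneg (by linarith : (0:ℝ) ≤ 1 - x)]
    have h5 : (1-x)^M * |u.eval x| ≤ (C * Cm * (1-x)) * (1-x)^M := by
      rw [← h4]
      calc |pR.eval x| ≤ C * (Pp (M+1)).eval x := h1
        _ ≤ C * (Cm * (1-x)^(M+1)) := mul_le_mul_of_nonneg_left h2 hC
        _ = (C * Cm * (1-x)) * (1-x)^M := by ring
    have hpos : (0:ℝ) < (1-x)^M := pow_pos (by linarith) M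
    calc |u.eval x| = ((1-x)^M * |u.eval x|) / (1-x)^M := by field_simp
      _ ≤ ((C * Cm * (1-x)) * (1-x)^M) / (1-x)^M := by gcongr
      _ = C * Cm * (1-x) := by field_simp
  have hseq : Filter.Tendsto (fun j : ℕ => (1 : ℝ) - 1/((j:ℝ)+2)) Filter.atTop (nhds 1) := by
    have h0 : Filter.Tendsto (fun j : ℕ => 1/((j:ℝ)+2)) Filter.atTop (nhds 0) := by
      have := tendsto_one_div_add_atTop_nhds_zero_nat (𝕜 := ℝ)
      have hcomp := this.comp (Filter.tendsto_add_atTop_nat 1)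
      convert hcomp using 2 with j
      simp; ring
    simpa using (tendsto_const_nhds (x := (1:ℝ)) (f := Filter.atTop)).sub h0
  have hmem : ∀ j : ℕ, 0 < (1:ℝ) - 1/((j:ℝ)+2) ∧ (1:ℝ) - 1/((j:ℝ)+2) < 1 := by
    intro j
    have h2 : (0:ℝ) < (j:ℝ)+2 := by positivity
    constructor
    · have : 1/((j:ℝ)+2) < 1 := by rw [div_lt_one h2]; linarith
      linarith
    · have : 0 < 1/((j:ℝ)+2) := by positivity
      linarith
  have htendu : Filter.Tendsto (fun j : ℕ => |u.eval ((1:ℝ) - 1/((j:ℝ)+2))|)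
      Filter.atTop (nhds (|u.eval 1|)) := by
    have hc : Continuous fun y : ℝ => |u.eval y| := (Polynomial.continuous u).abs
    exact (hc.tendsto 1).comp hseq
  have htendb : Filter.Tendsto (fun j : ℕ => C * Cm * (1 - ((1:ℝ) - 1/((j:ℝ)+2))))
      Filter.atTop (nhds 0) := by
    have h0 : Filter.Tendsto (fun j : ℕ => (1:ℝ) - ((1:ℝ) - 1/((j:ℝ)+2))) Filter.atTop
        (nhds 0) := by
      simpa using (tendsto_const_nhds (x := (1:ℝ)) (f := Filter.atTop)).sub hseq
    simpa using h0.const_mul (C * Cm)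
  have hfin : |u.eval 1| ≤ 0 :=
    le_of_tendsto_of_tendsto' htendu htendb (fun j => hub _ (hmem j).1 (hmem j).2)
  exact hu1 (abs_eq_zero.mp (le_antisymm hfin (abs_nonneg _)))

/-- The Euler product is not a rational power series. -/
lemma euler_not_rational (E : PowerSeries ℚ)
    (hE : ∀ k N : ℕ, k ≤ N →
      (PowerSeries.coeff (R := ℚ) k) E =
        (PowerSeries.coeff (R := ℚ) k) (∏ n ∈ Finset.range N, (1 - PowerSeries.X ^ (n+1)))) :
    ¬ IsRationalPS E := by
  rintro ⟨p, q, hq0, hpq⟩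
  set e : ℕ → ℝ := fun n => ((PowerSeries.coeff (R := ℚ) n E : ℚ) : ℝ) with he
  have hePp : ∀ k N : ℕ, k ≤ N → e k = (Pp N).coeff k := by
    intro k N hk
    rw [he]; dsimp only
    rw [hE k N hk]
    exact coeff_cast N k
  set pR := p.map (Rat.castHom ℝ) with hpR
  set qR := q.map (Rat.castHom ℝ) with hqR
  have hconv : ∀ n, ∑ kl ∈ Finset.HasAntidiagonal.antidiagonal n, qR.coeff kl.1 * e kl.2 = pR.coeff n := by
    intro n
    have h := congrArg (fun s => ((PowerSeries.coeff (R := ℚ) n s : ℚ) : ℝ)) hpq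
    simp only [PowerSeries.coeff_mul, Polynomial.coeff_coe] at h
    push_cast at h
    simpa [hpR, hqR, Polynomial.coeff_map] using h
  have hmain := main_est e hePp qR pR hconv
  have hp0 : pR = 0 :=
    poly_zero pR _ (Finset.sum_nonneg fun i _ => abs_nonneg _) hmain
  have hp : p = 0 := Polynomial.map_injective _ (Rat.castHom ℝ).injective (by rw [Polynomial.map_zero]; exact hp0)
  subst hp
  have hE0 : (PowerSeries.coeff (R := ℚ) 0) E = 1 := by
    rw [hE 0 0 le_rfl]; simp
  have h := congrArg (PowerSeries.coeff (R := ℚ) 0) hpq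
  simp only [PowerSeries.coeff_mul, Finset.Nat.antidiagonal_zero, Finset.sum_singleton,
    Polynomial.coeff_coe, hE0, mul_one, Polynomial.coeff_zero, map_zero] at h
  exact hq0 h

end Stmt10Aux

/-- Let `E` be the Euler product `∏_{n≥1} (1 − zⁿ)`, characterized by agreement with
its partial products in low degrees. Then
`f(z) = 1/((1−2z)²·E(z))` is not a rational function; equivalently, `E(z) = ∏ (1−zⁿ)`
is not a rational function. -/
theorem stmt_10 (E : PowerSeries ℚ)
    (hE : ∀ k N : ℕ, k ≤ N →
      (PowerSeries.coeff (R := ℚ) k) E =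
        (PowerSeries.coeff (R := ℚ) k) (∏ n ∈ Finset.range N, (1 - X ^ (n+1)))) :
    ¬ IsRationalPS (((1 - 2*X)^2 * E : PowerSeries ℚ)⁻¹) ∧ ¬ IsRationalPS E := by
  have hirr : ¬ IsRationalPS E := Stmt10Aux.euler_not_rational E hE
  have hE0 : (PowerSeries.coeff (R := ℚ) 0) E = 1 := by
    rw [hE 0 0 le_rfl]; simp
  constructor
  · intro h
    apply hirr
    obtain ⟨p, q, hq0, hpq⟩ := h
    set G : PowerSeries ℚ := (1 - 2*PowerSeries.X)^2 * E with hG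
    have hg1 : PowerSeries.constantCoeff (R := ℚ) G = 1 := by
      rw [hG, map_mul, map_pow, map_sub, map_one, map_mul, PowerSeries.constantCoeff_X,
        mul_zero, sub_zero, one_pow, one_mul, ← PowerSeries.coeff_zero_eq_constantCoeff, hE0]
    have hGc : PowerSeries.constantCoeff (R := ℚ) G ≠ 0 := by rw [hg1]; exact one_ne_zero
    have hinv : G⁻¹ * G = 1 := PowerSeries.inv_mul_cancel _ hGc
    have hpG : (p : PowerSeries ℚ) * G = (q : PowerSeries ℚ) := by
      have := congrArg (· * G) hpq
      simpa [mul_assoc, hinv] using this.symm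
    have hp0 : p.coeff 0 ≠ 0 := by
      have h0 := congrArg (PowerSeries.constantCoeff (R := ℚ)) hpq
      rw [map_mul, PowerSeries.constantCoeff_inv, hg1, inv_one, mul_one] at h0
      simp only [Polynomial.constantCoeff_coe] at h0
      rw [← h0]; exact hq0
    refine ⟨q, p * (1 - 2*Polynomial.X)^2, ?_, ?_⟩
    · have h2 : ((1 - 2*Polynomial.X : Polynomial ℚ)^2).coeff 0 = 1 := by
        rw [Polynomial.coeff_zero_eq_eval_zero]
        simp
      rw [Polynomial.mul_coeff_zero, h2, mul_one]
      exact hp0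
    · have hcoe : ((p * (1 - 2*Polynomial.X)^2 : Polynomial ℚ) : PowerSeries ℚ)
          = (p : PowerSeries ℚ) * (1 - 2*PowerSeries.X)^2 := by
        rw [← Polynomial.coeToPowerSeries.ringHom_apply, map_mul, map_pow, map_sub, map_one,
          map_mul, map_ofNat, Polynomial.coeToPowerSeries.ringHom_apply]
        rw [Polynomial.coeToPowerSeries.ringHom_apply, Polynomial.coe_X]
      rw [hcoe, mul_assoc, ← hG]
      exact hpG
  · exact hirr
end

section
/- If 1/R^!(z) = 1 − 9z + 9z² − z³ − 5z⁴ + 4z⁵ − z⁶ and the Hilbert series of the double dual is G(z) = 1 + 9z + 9z² + z³, then R^!(z)·G(−z) ≠ 1; in particular the coefficient of z⁴ in R^!(z)·G(−z) equals 5. -/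
open PowerSeries

/-- Case 83: with `1/R^!(z) = 1 − 9z + 9z² − z³ − 5z⁴ + 4z⁵ − z⁶` and
`G(z) = 1 + 9z + 9z² + z³`, we have `R^!(z)·G(−z) ≠ 1`; in particular the
coefficient of `z⁴` in `R^!(z)·G(−z)` equals `5`. -/
theorem stmt_11 :
    ((1 - 9*X + 9*X^2 - X^3 - 5*X^4 + 4*X^5 - X^6 : PowerSeries ℚ)⁻¹ *
        (1 - 9*X + 9*X^2 - X^3) ≠ 1) ∧
    (PowerSeries.coeff (R := ℚ) 4)
      ((1 - 9*X + 9*X^2 - X^3 - 5*X^4 + 4*X^5 - X^6 : PowerSeries ℚ)⁻¹ *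
        (1 - 9*X + 9*X^2 - X^3)) = 5 := by
  set D : PowerSeries ℚ := 1 - 9*X + 9*X^2 - X^3 - 5*X^4 + 4*X^5 - X^6 with hD
  have hc : constantCoeff D ≠ 0 := by
    simp [hD, map_sub, map_add, map_mul, map_pow, constantCoeff_X]
  have key : D⁻¹ * (1 - 9*X + 9*X^2 - X^3) =
      1 + X^4 * (D⁻¹ * (5 - 4*X + X^2)) := by
    have hG : (1 - 9*X + 9*X^2 - X^3 : PowerSeries ℚ) = D + X^4 * (5 - 4*X + X^2) := by
      rw [hD]; ring
    rw [hG, mul_add, PowerSeries.inv_mul_cancel D hc]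
    ring
  have hcoeff : (coeff 4) (D⁻¹ * (1 - 9*X + 9*X^2 - X^3)) = 5 := by
    rw [key, map_add]
    have : ((4 : ℕ)) = 0 + 4 := by norm_num
    rw [show (coeff 4) (X ^ 4 * (D⁻¹ * (5 - 4*X + X^2))) = coeff 0 (D⁻¹ * (5 - 4*X + X^2)) from coeff_X_pow_mul (D⁻¹ * (5 - 4*X + X^2)) 4 0]
    have h0 : (coeff 0) (D⁻¹ * (5 - 4*X + X^2)) = 5 := by
      rw [coeff_zero_eq_constantCoeff, map_mul, constantCoeff_inv]
      simp [hD, map_sub, map_add, map_mul, map_pow, constantCoeff_X, map_ofNat]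
    rw [h0]
    simp [coeff_one]
  refine ⟨?_, hcoeff⟩
  intro h
  rw [h] at hcoeff
  simp [coeff_one] at hcoeff
end
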